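/- Let 𝔸 be a category with binary coproducts, let g : w ⟶ x be a split epimorphism and let f : x ⟶ y be a regular epimorphism. Then the composite g ≫ f : w ⟶ y is a regular epimorphism. -/

import Mathlib

open CategoryTheory

/-- in a category with binary coproducts, the composite of a split
epimorphism followed by a regular epimorphism is a regular epimorphism. -/
theorem stmt16 {𝔸 : Type*} [Category 𝔸] [Limits.HasBinaryCoproducts 𝔸]
    {w x y : 𝔸} (g : w ⟶ x) (f : x ⟶ y) [IsSplitEpi g] (hf : RegularEpi f) :
    Nonempty (RegularEpi (g ≫ f)) := by
  open Limits in
  let s : x ⟶ w := section_ g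
  refine ⟨{
    W := hf.W ⨿ w
    left := coprod.desc (hf.left ≫ s) (𝟙 w)
    right := coprod.desc (hf.right ≫ s) (g ≫ s)
    w := by
      apply coprod.hom_ext <;> simp [s, hf.w, reassoc_of% hf.w]
    isColimit := ?_ }⟩
  apply Cofork.IsColimit.mk' _ _
  intro c
  have hc := c.condition
  have h1 : hf.left ≫ s ≫ c.π = hf.right ≫ s ≫ c.π := by
    have := coprod.inl (X := hf.W) (Y := w) ≫= hc
    simp only [Category.assoc, coprod.desc_comp] at this
    erw [coprod.inl_desc, coprod.inl_desc] at this
    simpa using this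
  have h2 : c.π = g ≫ s ≫ c.π := by
    have := coprod.inr (X := hf.W) (Y := w) ≫= hc
    simp only [Category.assoc, coprod.desc_comp] at this
    erw [coprod.inr_desc, coprod.inr_desc] at this
    simpa using this
  obtain ⟨l, hl⟩ := Cofork.IsColimit.desc' hf.isColimit (s ≫ c.π)
    (by simpa using h1)
  simp only [Cofork.π_ofπ] at hl ⊢
  refine ⟨l, by rw [Category.assoc, hl, ← h2], ?_⟩
  intro m hm
  have : Epi f := hf.epi
  have : Epi (g ≫ f) := epi_comp g f
  rw [← cancel_epi (g ≫ f), hm, Category.assoc, hl, ← h2]
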